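/- Let q be an odd prime, let ν generate the group of units (ZMod q)ˣ, and set zc = -!![1, 0; 1, 1] and zd = -!![1, 0; ν, 1] in SL₂(ZMod q). Then zc is conjugate to (zc)⁻¹ in SL₂(ZMod q) if and only if q ≡ 1 (mod 4), and likewise zd is conjugate to (zd)⁻¹ in SL₂(ZMod q) if and only if q ≡ 1 (mod 4). -/

import Mathlib

open Matrix

private lemma key_conj (q : ℕ) [Fact (Nat.Prime q)] (hq : Odd q) (a : ZMod q) (ha : a ≠ 0)
    (z : Matrix.SpecialLinearGroup (Fin 2) (ZMod q))
    (hz : (z : Matrix (Fin 2) (Fin 2) (ZMod q)) = -!![1, 0; a, 1]) :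
    IsConj z z⁻¹ ↔ q % 4 = 1 := by
  have hdetw : (!![-1, 0; a, -1] : Matrix (Fin 2) (Fin 2) (ZMod q)).det = 1 := by
    simp [Matrix.det_fin_two_of]
  set w : Matrix.SpecialLinearGroup (Fin 2) (ZMod q) := ⟨!![-1, 0; a, -1], hdetw⟩ with hw
  have hzw : z * w = 1 := by
    apply Subtype.ext
    show (z : Matrix (Fin 2) (Fin 2) (ZMod q)) * (w : Matrix (Fin 2) (Fin 2) (ZMod q)) = 1
    rw [hz]
    ext i j
    fin_cases i <;> fin_cases j <;>
      simp [hw, Matrix.mul_apply, Fin.sum_univ_two, Matrix.one_apply] <;> ring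
  have hinv : z⁻¹ = w := inv_eq_of_mul_eq_one_right hzw
  have hmod : q % 4 = 1 ↔ q % 4 ≠ 3 := by
    have h2 : q % 2 = 1 := Nat.odd_iff.mp hq
    have h4 := Nat.mod_mod_of_dvd q (by norm_num : 2 ∣ 4)
    omega
  rw [hmod, ← ZMod.exists_sq_eq_neg_one_iff]
  constructor
  · rw [isConj_iff]
    rintro ⟨c, hc⟩
    rw [mul_inv_eq_iff_eq_mul, hinv] at hc
    have hm : (c : Matrix (Fin 2) (Fin 2) (ZMod q)) * (z : Matrix (Fin 2) (Fin 2) (ZMod q))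
        = (w : Matrix (Fin 2) (Fin 2) (ZMod q)) * (c : Matrix (Fin 2) (Fin 2) (ZMod q)) := by
      rw [← Matrix.SpecialLinearGroup.coe_mul, ← Matrix.SpecialLinearGroup.coe_mul, hc]
    rw [hz] at hm
    have h00 := congrFun (congrFun hm 0) 0 
    have h10 := congrFun (congrFun hm 1) 0
    simp [hw, Matrix.mul_apply, Fin.sum_univ_two] at h00 h10
    have hdet := c.2
    rw [Matrix.det_fin_two] at hdet
    have h1 : (c : Matrix (Fin 2) (Fin 2) (ZMod q)) 0 1 = 0 := h00.resolve_right ha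
    have h2 : a * ((c : Matrix (Fin 2) (Fin 2) (ZMod q)) 1 1
        + (c : Matrix (Fin 2) (Fin 2) (ZMod q)) 0 0) = 0 := by linear_combination -h10
    rcases mul_eq_zero.mp h2 with h | h
    · exact absurd h ha
    · exact ⟨(c : Matrix (Fin 2) (Fin 2) (ZMod q)) 0 0, by
        linear_combination hdet - (c : Matrix (Fin 2) (Fin 2) (ZMod q)) 0 0 * h
          + (c : Matrix (Fin 2) (Fin 2) (ZMod q)) 1 0 * h1⟩
  · rintro ⟨i, hi⟩
    have hdetc : (!![i, 0; 0, -i] : Matrix (Fin 2) (Fin 2) (ZMod q)).det = 1 := by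
      simp [Matrix.det_fin_two_of]
      linear_combination hi
    rw [isConj_iff]
    set c : Matrix.SpecialLinearGroup (Fin 2) (ZMod q) := ⟨!![i, 0; 0, -i], hdetc⟩ with hc
    refine ⟨c, ?_⟩
    rw [mul_inv_eq_iff_eq_mul, hinv]
    apply Subtype.ext
    show (!![i, 0; 0, -i] : Matrix (Fin 2) (Fin 2) (ZMod q)) * (z : Matrix (Fin 2) (Fin 2) (ZMod q))
        = (w : Matrix (Fin 2) (Fin 2) (ZMod q)) * !![i, 0; 0, -i]
    rw [hz]
    ext r s
    fin_cases r <;> fin_cases s <;>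
      simp [hw, Matrix.mul_apply, Fin.sum_univ_two] <;> ring

theorem neg_conj_inv_iff_one_mod_four (q : ℕ) [Fact (Nat.Prime q)] (hq : Odd q)
    (ν : (ZMod q)ˣ) (hν : ∀ x : (ZMod q)ˣ, x ∈ Subgroup.zpowers ν)
    (zc zd : Matrix.SpecialLinearGroup (Fin 2) (ZMod q))
    (hzc : (zc : Matrix (Fin 2) (Fin 2) (ZMod q)) = -!![1, 0; 1, 1])
    (hzd : (zd : Matrix (Fin 2) (Fin 2) (ZMod q)) = -!![1, 0; (ν : ZMod q), 1]) :
    (IsConj zc zc⁻¹ ↔ q % 4 = 1) ∧ (IsConj zd zd⁻¹ ↔ q % 4 = 1) :=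
  ⟨key_conj q hq 1 one_ne_zero zc hzc, key_conj q hq (ν : ZMod q) ν.ne_zero zd hzd⟩
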